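/- For u with B(u,u) = 1 and the matrix T = Δ·[[0, -u₃/a₁, u₂/a₁], [u₃/a₂, 0, -u₁/a₂], [-u₂/a₃, u₁/a₃, 0]], the matrix exponential exp(θT) equals I + sin(θ)·T + (1 - cos(θ))·T². -/

import Mathlib

open scoped Nat


set_option maxHeartbeats 2000000 in
theorem stmt_6_aux (a₁ a₂ a₃ : ℝ) (h₁ : 0 < a₁) (h₂ : 0 < a₂) (h₃ : 0 < a₃)
    (u : Fin 3 → ℝ)
    (hu : a₁ * u 0 ^ 2 + a₂ * u 1 ^ 2 + a₃ * u 2 ^ 2 = 1) :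
    (a₁ * a₂ * a₃) • ((!![0, -u 2 / a₁, u 1 / a₁;
                     u 2 / a₂, 0, -u 0 / a₂;
                     -u 1 / a₃, u 0 / a₃, 0] : Matrix (Fin 3) (Fin 3) ℝ) * !![0, -u 2 / a₁, u 1 / a₁;
                     u 2 / a₂, 0, -u 0 / a₂;
                     -u 1 / a₃, u 0 / a₃, 0] * !![0, -u 2 / a₁, u 1 / a₁;
                     u 2 / a₂, 0, -u 0 / a₂;
                     -u 1 / a₃, u 0 / a₃, 0]) = -!![0, -u 2 / a₁, u 1 / a₁;
                     u 2 / a₂, 0, -u 0 / a₂;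
                     -u 1 / a₃, u 0 / a₃, 0] := by
  rw [Matrix.mul_fin_three, Matrix.mul_fin_three]
  ext i j
  fin_cases i <;> fin_cases j <;>
    simp only [Matrix.smul_apply, Matrix.neg_apply, Matrix.of_apply, Matrix.cons_val',
      Matrix.cons_val_zero, Matrix.cons_val_one, Matrix.head_cons, Matrix.empty_val',
      Matrix.cons_val_fin_one, Matrix.head_fin_const, smul_eq_mul, Fin.zero_eta, Fin.mk_one, Fin.isValue, Matrix.cons_val_two, Matrix.tail_cons, Fin.reduceFinMk] <;>
    field_simp <;> ring_nf <;>
    first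
      | linear_combination (a₁^4*a₂^2*a₃^2*u 2) * hu
      | linear_combination (-(a₁^4*a₂^2*a₃^2*u 1)) * hu
      | linear_combination (-(a₁^2*a₂^4*a₃^2*u 2)) * hu
      | linear_combination (a₁^2*a₂^4*a₃^2*u 0) * hu
      | linear_combination (a₁^2*a₂^2*a₃^4*u 1) * hu
      | linear_combination (-(a₁^2*a₂^2*a₃^4*u 0)) * hu
      | linear_combination (u 0) * hu
      | linear_combination (-u 0) * hu
      | linear_combination (u 1) * hu
      | linear_combination (-u 1) * hu
      | linear_combination (u 2) * hu
      | linear_combination (-u 2) * hu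

set_option maxHeartbeats 1000000 in
theorem stmt_6 (a₁ a₂ a₃ : ℝ) (h₁ : 0 < a₁) (h₂ : 0 < a₂) (h₃ : 0 < a₃)
    (Δ : ℝ) (hΔ : Δ = Real.sqrt (a₁ * a₂ * a₃))
    (u : Fin 3 → ℝ)
    (T : Matrix (Fin 3) (Fin 3) ℝ)
    (hT : T = Δ • !![0, -u 2 / a₁, u 1 / a₁;
                     u 2 / a₂, 0, -u 0 / a₂;
                     -u 1 / a₃, u 0 / a₃, 0])
    (hu : a₁ * u 0 ^ 2 + a₂ * u 1 ^ 2 + a₃ * u 2 ^ 2 = 1) (θ : ℝ) :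
    NormedSpace.exp (θ • T) = 1 + Real.sin θ • T + (1 - Real.cos θ) • T ^ 2 := by
  have hΔ2 : Δ ^ 2 = a₁ * a₂ * a₃ := by
    rw [hΔ]; exact Real.sq_sqrt (by positivity)
  set M : Matrix (Fin 3) (Fin 3) ℝ := !![0, -u 2 / a₁, u 1 / a₁;
                     u 2 / a₂, 0, -u 0 / a₂;
                     -u 1 / a₃, u 0 / a₃, 0] with hM
  have hM3 : (a₁ * a₂ * a₃) • (M * M * M) = -M := stmt_6_aux a₁ a₂ a₃ h₁ h₂ h₃ u hu
  have hT3 : T ^ 3 = -T := by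
    rw [hT, smul_pow]
    have e3 : Δ ^ 3 = Δ * (a₁ * a₂ * a₃) := by rw [← hΔ2]; ring
    rw [show M ^ 3 = M * M * M by rw [pow_succ, pow_succ, pow_one], e3, mul_smul, hM3, smul_neg]
  have hodd : ∀ k : ℕ, T ^ (2 * k + 1) = ((-1 : ℝ) ^ k) • T := by
    intro k
    induction k with
    | zero => simp
    | succ n ih =>
      have e : 2 * (n + 1) + 1 = (2 * n + 1) + 2 := by ring
      rw [e, pow_add, ih, smul_mul_assoc, show T * T ^ 2 = T ^ 3 from (pow_succ' T 2).symm,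
        hT3, pow_succ]
      rw [smul_neg, mul_neg_one, neg_smul]
  have heven : ∀ k : ℕ, T ^ (2 * k + 2) = ((-1 : ℝ) ^ k) • T ^ 2 := by
    intro k
    rw [show 2 * k + 2 = (2 * k + 1) + 1 from rfl, pow_succ, hodd k, smul_mul_assoc, ← pow_two]
  letI : SeminormedRing (Matrix (Fin 3) (Fin 3) ℝ) := Matrix.linftyOpSemiNormedRing
  letI : NormedRing (Matrix (Fin 3) (Fin 3) ℝ) := Matrix.linftyOpNormedRing
  letI : NormedAlgebra ℝ (Matrix (Fin 3) (Fin 3) ℝ) := Matrix.linftyOpNormedAlgebra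
  have hodd' : HasSum (fun k : ℕ => (((2 * k + 1)! : ℝ)⁻¹) • (θ • T) ^ (2 * k + 1))
      (Real.sin θ • T) := by
    have key : (fun k : ℕ => (((2 * k + 1)! : ℝ)⁻¹) • (θ • T) ^ (2 * k + 1))
        = fun k : ℕ => ((-1 : ℝ) ^ k * θ ^ (2 * k + 1) / (2 * k + 1)!) • T := by
      funext k
      rw [smul_pow, hodd k, smul_smul, smul_smul]
      congr 1
      ring
    rw [key]
    exact (Real.hasSum_sin θ).smul_const T
  have hcos : HasSum (fun k : ℕ => ((-1 : ℝ) ^ (k + 1) * θ ^ (2 * (k + 1)) / (2 * (k + 1))!))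
      (Real.cos θ - 1) := by
    have h1 := (hasSum_nat_add_iff'
      (f := fun n : ℕ => ((-1 : ℝ)) ^ n * θ ^ (2 * n) / (2 * n)!) 1).mpr (Real.hasSum_cos θ)
    simpa using h1
  have heven' : HasSum (fun k : ℕ => (((2 * k)! : ℝ)⁻¹) • (θ • T) ^ (2 * k))
      (1 + (1 - Real.cos θ) • T ^ 2) := by
    have h2 : HasSum (fun k : ℕ => (((2 * (k + 1))! : ℝ)⁻¹) • (θ • T) ^ (2 * (k + 1)))
        ((1 - Real.cos θ) • T ^ 2) := by
      have key : (fun k : ℕ => (((2 * (k + 1))! : ℝ)⁻¹) • (θ • T) ^ (2 * (k + 1)))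
          = fun k : ℕ => (-((-1 : ℝ) ^ (k + 1) * θ ^ (2 * (k + 1)) / (2 * (k + 1))!)) • T ^ 2 := by
        funext k
        have e : 2 * (k + 1) = 2 * k + 2 := by ring
        rw [smul_pow, e, heven k, smul_smul, smul_smul]
        congr 1
        push_cast
        ring
      rw [key]
      have := hcos.neg.smul_const (T ^ 2)
      simpa [neg_sub] using this
    have h3 := (hasSum_nat_add_iff
      (f := fun k : ℕ => (((2 * k)! : ℝ)⁻¹) • (θ • T) ^ (2 * k)) 1).mp h2
    simp only [Finset.range_one, Finset.sum_singleton] at h3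
    convert h3 using 1
    exacts [rfl, by simp [add_comm]]
  rw [NormedSpace.exp_eq_tsum (𝕂 := ℝ)]
  have h := HasSum.even_add_odd (f := fun n : ℕ => ((n ! : ℝ)⁻¹) • (θ • T) ^ n) heven' hodd'
  beta_reduce
  rw [h.tsum_eq]
  abel
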